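/- arXiv:1906.01056 — 6 statements merged into one kernel-verified Lean document; each statement's English description precedes it below -/
import Mathlib

section
/- Let G be a connected chordal graph and let u, v be non-adjacent vertices. If the induced subgraph G[V − I_{u,v}] has no path from u to v, where I_{u,v} = N(u) ∩ N(v), then the graph G + {u,v} obtained by adding the edge uv is chordal. -/
open SimpleGraph

/-- `G` has an induced (chordless) cycle of length `n`. -/
def HasInducedCycle {V : Type*} (G : SimpleGraph V) (n : ℕ) : Prop :=
  Nonempty (SimpleGraph.cycleGraph n ↪g G)

/-- `G` is chordal: it has no induced cycle of length 4 or more. -/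
def Chordal {V : Type*} (G : SimpleGraph V) : Prop :=
  ∀ n, 4 ≤ n → ¬ HasInducedCycle G n

/-- `G` is weakly chordal: neither `G` nor its complement has an induced cycle
of length 5 or more. -/
def WeaklyChordal {V : Type*} (G : SimpleGraph V) : Prop :=
  (∀ n, 5 ≤ n → ¬ HasInducedCycle G n) ∧ (∀ n, 5 ≤ n → ¬ HasInducedCycle Gᶜ n)

/-- `G` has an induced (chordless) path of length `ℓ` (i.e. with `ℓ` edges)
from `u` to `v`. -/
def HasInducedPath {V : Type*} (G : SimpleGraph V) (u v : V) (ℓ : ℕ) : Prop :=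
  ∃ f : SimpleGraph.pathGraph (ℓ + 1) ↪g G, f 0 = u ∧ f (Fin.last ℓ) = v

section AuxLemmas

variable {V : Type*}

private lemma fin_last_eq_neg_one (m : ℕ) : (Fin.last (m+3) : Fin (m+4)) = -1 :=
  neg_eq_iff_eq_neg.mp (Fin.neg_last _)

private lemma fin_sub_one_iff {m : ℕ} (i j : Fin (m+4)) :
    j - i = 1 ↔ (i.val + 1 = j.val ∨ (i.val = m+3 ∧ j.val = 0)) := by
  have hi := i.isLt
  have hj := j.isLt
  rw [sub_eq_iff_eq_add', Fin.ext_iff, Fin.val_add_one]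
  split
  · next h =>
    have h' : i.val = m + 3 := by rw [h]; rfl
    omega
  · next h =>
    have h' : i.val ≠ m + 3 := fun hh => h (Fin.ext hh)
    omega

private lemma cycle_adj_iff {m : ℕ} (i j : Fin (m+4)) :
    (cycleGraph (m+4)).Adj i j ↔ (i - j = 1 ∨ j - i = 1) := by
  have h1 : (1 : Fin (m+4)).val = 1 := by
    rw [Fin.val_one']; exact Nat.mod_eq_of_lt (by omega)
  rw [cycleGraph_adj']
  constructor
  · rintro (h | h)
    · exact Or.inl (Fin.ext (by rw [h, h1]))
    · exact Or.inr (Fin.ext (by rw [h, h1]))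
  · rintro (h | h)
    · exact Or.inl (by rw [h, h1])
    · exact Or.inr (by rw [h, h1])

/-- If the cycle does not contain both `u` and `v`, it is an induced cycle of `G`. -/
private lemma drop_edge {G : SimpleGraph V} {u v : V} {n : ℕ}
    (f : cycleGraph n ↪g (G ⊔ edge u v))
    (h : ¬ ∃ a b, f a = u ∧ f b = v) : Nonempty (cycleGraph n ↪g G) := by
  refine ⟨⟨f.toEmbedding, fun {i j} => ?_⟩⟩
  constructor
  · intro hG
    exact f.map_adj_iff.mp ((sup_adj _ _ _ _).mpr (Or.inl hG))
  · intro hc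
    have hs := f.map_adj_iff.mpr hc
    rw [sup_adj] at hs
    rcases hs with hG | hE
    · exact hG
    · rw [edge_adj] at hE
      exfalso
      rcases hE.1 with ⟨h1, h2⟩ | ⟨h1, h2⟩
      · exact h ⟨i, j, h1, h2⟩
      · exact h ⟨j, i, h2, h1⟩

/-- Cutting an induced cycle of `G ⊔ edge u v` at the edge `uv` yields an
induced path of `G` from `u` to `v`. -/
private lemma cycle_to_path {G : SimpleGraph V} {u v : V}
    (huv : ¬ G.Adj u v) {m : ℕ}
    (f : cycleGraph (m+4) ↪g (G ⊔ edge u v)) (a : Fin (m+4))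
    (hu : f a = u) (hv : f (a - 1) = v) :
    ∃ q : pathGraph (m+4) ↪g G, q 0 = u ∧ q (Fin.last (m+3)) = v := by
  have hlast : (Fin.last (m+3) : Fin (m+4)) = -1 := fin_last_eq_neg_one m
  refine ⟨⟨⟨fun j => f (a + j), fun i j h => ?_⟩, fun {i j} => ?_⟩, ?_, ?_⟩
  · exact add_left_cancel (f.injective h)
  · constructor
    · intro h
      have h' : G.Adj (f (a + i)) (f (a + j)) := h
      have hc : (cycleGraph (m+4)).Adj (a+i) (a+j) :=
        f.map_adj_iff.mp ((sup_adj _ _ _ _).mpr (Or.inl h'))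
      rw [cycle_adj_iff, add_sub_add_left_eq_sub, add_sub_add_left_eq_sub] at hc
      rw [pathGraph_adj]
      have hi := i.isLt
      have hj := j.isLt
      rcases hc with hc | hc
      · rw [fin_sub_one_iff] at hc
        rcases hc with hc | ⟨hc1, hc2⟩
        · exact Or.inr hc
        · exfalso
          have hj' : j = -1 := by rw [← hlast]; exact Fin.ext (by simpa using hc1)
          have hi' : i = 0 := Fin.ext (by simpa using hc2)
          rw [hi', hj', add_zero, hu, ← sub_eq_add_neg, hv] at h'
          exact huv h'
      · rw [fin_sub_one_iff] at hc
        rcases hc with hc | ⟨hc1, hc2⟩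
        · exact Or.inl hc
        · exfalso
          have hi' : i = -1 := by rw [← hlast]; exact Fin.ext (by simpa using hc1)
          have hj' : j = 0 := Fin.ext (by simpa using hc2)
          rw [hi', hj', add_zero, hu, ← sub_eq_add_neg, hv] at h'
          exact huv h'.symm
    · intro h
      rw [pathGraph_adj] at h
      have hc : (cycleGraph (m+4)).Adj (a+i) (a+j) := by
        rw [cycle_adj_iff, add_sub_add_left_eq_sub, add_sub_add_left_eq_sub]
        rcases h with h | h
        · exact Or.inr ((fin_sub_one_iff i j).mpr (Or.inl h))
        · exact Or.inl ((fin_sub_one_iff j i).mpr (Or.inl h))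
      have hs := f.map_adj_iff.mpr hc
      rw [sup_adj] at hs
      rcases hs with hG | hE
      · exact hG
      · exfalso
        rw [edge_adj] at hE
        have hi := i.isLt
        have hj := j.isLt
        rcases hE.1 with ⟨h1, h2⟩ | ⟨h1, h2⟩
        · have e1 : a + i = a := f.injective (h1.trans hu.symm)
          have e2 : a + j = a - 1 := f.injective (h2.trans hv.symm)
          have hi0 : i = 0 := by rwa [add_eq_left] at e1
          have hj1 : j = -1 := by rwa [sub_eq_add_neg, add_right_inj] at e2
          have hiv : i.val = 0 := by rw [hi0]; simp
          have hjv : j.val = m + 3 := by rw [hj1, ← hlast]; rfl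
          omega
        · have e1 : a + j = a := f.injective (h2.trans hu.symm)
          have e2 : a + i = a - 1 := f.injective (h1.trans hv.symm)
          have hj0 : j = 0 := by rwa [add_eq_left] at e1
          have hi1 : i = -1 := by rwa [sub_eq_add_neg, add_right_inj] at e2
          have hjv : j.val = 0 := by rw [hj0]; simp
          have hiv : i.val = m + 3 := by rw [hi1, ← hlast]; rfl
          omega
  · show f (a + 0) = u
    rw [add_zero, hu]
  · show f (a + Fin.last (m+3)) = v
    rw [hlast, ← sub_eq_add_neg, hv]

/-- Negation is an automorphism of the cycle graph. -/
private def cycleNegIso (m : ℕ) : cycleGraph (m+4) ≃g cycleGraph (m+4) where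
  toEquiv := Equiv.neg (Fin (m+4))
  map_rel_iff' := by
    intro i j
    simp only [Equiv.neg_apply]
    rw [cycleGraph_adj', cycleGraph_adj', neg_sub_neg, neg_sub_neg]
    exact or_comm

/-- Under the separation hypothesis, there is no long induced path from `u` to `v`. -/
private lemma no_long_path {G : SimpleGraph V} {u v : V}
    (hsep : ¬ (G.induce ((G.neighborSet u ∩ G.neighborSet v)ᶜ)).Reachable
      ⟨u, fun h => G.irrefl h.1⟩ ⟨v, fun h => G.irrefl h.2⟩)
    {k : ℕ} (hk : 3 ≤ k) (f : pathGraph (k+1) ↪g G)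
    (h0 : f 0 = u) (hl : f (Fin.last k) = v) : False := by
  by_cases hI : ∃ i, f i ∈ G.neighborSet u ∩ G.neighborSet v
  · obtain ⟨i, hiu, hiv⟩ := hI
    rw [mem_neighborSet] at hiu hiv
    have a1 : G.Adj (f 0) (f i) := by rw [h0]; exact hiu
    have a2 : G.Adj (f (Fin.last k)) (f i) := by rw [hl]; exact hiv
    have p1 := f.map_adj_iff.mp a1
    have p2 := f.map_adj_iff.mp a2
    rw [pathGraph_adj] at p1 p2
    have hi := i.isLt
    simp only [Fin.val_zero, Fin.val_last] at p1 p2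
    omega
  · push_neg at hI
    let g : pathGraph (k+1) →g G.induce ((G.neighborSet u ∩ G.neighborSet v)ᶜ) :=
      ⟨fun i => ⟨f i, hI i⟩, fun {i j} h => f.map_adj_iff.mpr h⟩
    have hr : (pathGraph (k+1)).Reachable 0 (Fin.last k) :=
      pathGraph_preconnected (k+1) 0 (Fin.last k)
    have hmap := hr.map g
    apply hsep
    rwa [show g 0 = (⟨u, fun h => G.irrefl h.1⟩ :
            ((G.neighborSet u ∩ G.neighborSet v)ᶜ : Set V)) from Subtype.ext h0,
         show g (Fin.last k) = (⟨v, fun h => G.irrefl h.2⟩ :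
            ((G.neighborSet u ∩ G.neighborSet v)ᶜ : Set V)) from Subtype.ext hl] at hmap

end AuxLemmas

/-- Markenzon's criterion, "if" direction: if `G` is a connected chordal graph,
`u, v` are non-adjacent, and removing the common neighborhood
`I = N(u) ∩ N(v)` leaves `u` and `v` in different components, then
`G + {u,v}` is chordal. -/
theorem add_edge_chordal {V : Type*} (G : SimpleGraph V) (hconn : G.Connected)
    (hch : Chordal G) (u v : V) (hne : u ≠ v) (huv : ¬ G.Adj u v)
    (hsep : ¬ (G.induce ((G.neighborSet u ∩ G.neighborSet v)ᶜ)).Reachable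
      ⟨u, fun h => G.irrefl h.1⟩ ⟨v, fun h => G.irrefl h.2⟩) :
    Chordal (G ⊔ SimpleGraph.edge u v) := by
  intro n hn hcyc
  obtain ⟨f⟩ := hcyc
  by_cases hex : ∃ a b, f a = u ∧ f b = v
  · obtain ⟨a, b, hfa, hfb⟩ := hex
    obtain ⟨m, rfl⟩ : ∃ m, n = m + 4 := ⟨n - 4, by omega⟩
    have hadj : (G ⊔ edge u v).Adj (f a) (f b) := by
      rw [hfa, hfb]
      exact (sup_adj _ _ _ _).mpr (Or.inr ((edge_adj u v u v).mpr ⟨Or.inl ⟨rfl, rfl⟩, hne⟩))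
    have hab := f.map_adj_iff.mp hadj
    rw [cycle_adj_iff] at hab
    rcases hab with hab | hab
    · -- a - b = 1, i.e. b = a - 1
      have hb : b = a - 1 := by
        have h1 : a = 1 + b := sub_eq_iff_eq_add.mp hab
        exact eq_sub_iff_add_eq.mpr (by rw [h1]; exact add_comm b 1)
      have hv' : f (a - 1) = v := by rw [← hb]; exact hfb
      obtain ⟨q, hq0, hql⟩ := cycle_to_path huv f a hfa hv'
      exact no_long_path hsep (by omega : 3 ≤ m + 3) q hq0 hql
    · -- b - a = 1, i.e. b = a + 1; use the reflected cycle
      have hb : b = a + 1 := by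
        have h1 : b = 1 + a := sub_eq_iff_eq_add.mp hab
        rw [h1]; exact add_comm 1 a
      let f' : cycleGraph (m+4) ↪g (G ⊔ edge u v) :=
        f.comp (cycleNegIso m).toEmbedding
      have hfa' : f' (-a) = u := by
        show f (-(-a)) = u
        rw [neg_neg, hfa]
      have hfb' : f' (-a - 1) = v := by
        show f (-(-a - 1)) = v
        have hx : -(-a - 1) = a + 1 := by rw [neg_sub, sub_neg_eq_add]; exact add_comm 1 a
        rw [hx, ← hb, hfb]
      obtain ⟨q, hq0, hql⟩ := cycle_to_path huv f' (-a) hfa' hfb'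
      exact no_long_path hsep (by omega : 3 ≤ m + 3) q hq0 hql
  · exact hch n hn (drop_edge f hex)
end

section
/- Let G be a connected chordal graph and let u, v be non-adjacent vertices. If the induced subgraph G[V − I_{u,v}] contains a path from u to v, where I_{u,v} = N(u) ∩ N(v), then G + {u,v} is not chordal. -/
open SimpleGraph

lemma edist_getVert_le' {V : Type*} {G : SimpleGraph V} {a b : V} (p : G.Walk a b)
    {i j : ℕ} (hij : i ≤ j) :
    G.edist (p.getVert i) (p.getVert j) ≤ (j - i : ℕ) := by
  induction j with
  | zero =>
    have : i = 0 := by omega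
    subst this; simp [SimpleGraph.edist_self]
  | succ j ih =>
    rcases Nat.lt_or_ge i (j+1) with h | h
    · have h1 : i ≤ j := by omega
      have step : G.edist (p.getVert j) (p.getVert (j+1)) ≤ 1 := by
        rcases Nat.lt_or_ge j p.length with hj | hj
        · exact le_of_eq ((SimpleGraph.edist_eq_one_iff_adj).mpr (p.adj_getVert_succ hj))
        · rw [p.getVert_of_length_le hj, p.getVert_of_length_le (by omega)]
          simp [SimpleGraph.edist_self]
      calc G.edist (p.getVert i) (p.getVert (j+1))
          ≤ G.edist (p.getVert i) (p.getVert j) + G.edist (p.getVert j) (p.getVert (j+1)) :=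
            SimpleGraph.edist_triangle
        _ ≤ ((j - i : ℕ) : ℕ∞) + 1 := add_le_add (ih h1) step
        _ = ((j + 1 - i : ℕ) : ℕ∞) := by
            rw [← Nat.cast_one, ← Nat.cast_add]; congr 1; omega
    · have : i = j + 1 := by omega
      subst this; simp [SimpleGraph.edist_self]

lemma edist_getVert_shortest {V : Type*} {G : SimpleGraph V} {a b : V} (p : G.Walk a b)
    (hp : (p.length : ℕ∞) = G.edist a b) {i j : ℕ} (hij : i ≤ j) (hj : j ≤ p.length) :
    G.edist (p.getVert i) (p.getVert j) = (j - i : ℕ) := by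
  refine le_antisymm (edist_getVert_le' p hij) ?_
  have hne : G.edist (p.getVert i) (p.getVert j) ≠ ⊤ :=
    ne_top_of_le_ne_top (by simp) (edist_getVert_le' p hij)
  lift G.edist (p.getVert i) (p.getVert j) to ℕ using hne with k hk
  have h1 : G.edist a (p.getVert i) ≤ (i : ℕ∞) := by
    have := edist_getVert_le' p (Nat.zero_le i)
    simpa using this
  have h2 : G.edist (p.getVert j) b ≤ ((p.length - j : ℕ) : ℕ∞) := by
    have := edist_getVert_le' p hj
    rwa [p.getVert_length] at this
  have htri : (p.length : ℕ∞) ≤ (i : ℕ∞) + (k : ℕ∞) + ((p.length - j : ℕ) : ℕ∞) := by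
    calc (p.length : ℕ∞) = G.edist a b := hp
      _ ≤ G.edist a (p.getVert j) + G.edist (p.getVert j) b := SimpleGraph.edist_triangle
      _ ≤ (G.edist a (p.getVert i) + G.edist (p.getVert i) (p.getVert j))
            + G.edist (p.getVert j) b :=
          add_le_add SimpleGraph.edist_triangle le_rfl
      _ ≤ (i : ℕ∞) + (k : ℕ∞) + ((p.length - j : ℕ) : ℕ∞) := by
          exact add_le_add (add_le_add h1 (le_of_eq hk.symm)) h2
  have : p.length ≤ i + k + (p.length - j) := by exact_mod_cast htri
  exact_mod_cast (by omega : j - i ≤ k)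

lemma fin_sub_val_eq_one' {n : ℕ} (hn : 1 ≤ n) (i j : Fin (n+1)) :
    (i - j).val = 1 ↔ (i.val = j.val + 1 ∨ (j.val = n ∧ i.val = 0)) := by
  rcases i with ⟨i, hi⟩; rcases j with ⟨j, hj⟩
  simp only [Fin.sub_def]
  constructor
  · intro h
    rcases Nat.lt_or_ge (n + 1 - j + i) (n+1) with h' | h'
    · rw [Nat.mod_eq_of_lt h'] at h; omega
    · rw [Nat.mod_eq_sub_mod h', Nat.mod_eq_of_lt (by omega)] at h
      omega
  · intro h
    rcases h with h | ⟨h1, h2⟩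
    · have he : n + 1 - j + i = (n+1) + 1 := by omega
      rw [he, Nat.add_mod_left]
      exact Nat.mod_eq_of_lt (by omega)
    · have he : n + 1 - j + i = 1 := by omega
      rw [he]
      exact Nat.mod_eq_of_lt (by omega)

/-- Markenzon's criterion, "only if" direction: if `G` is a connected chordal
graph, `u, v` are non-adjacent, and `u` and `v` are still connected after
removing the common neighborhood `I = N(u) ∩ N(v)`, then `G + {u,v}` is not
chordal. -/
theorem add_edge_not_chordal {V : Type*} (G : SimpleGraph V) (hconn : G.Connected)
    (hch : Chordal G) (u v : V) (hne : u ≠ v) (huv : ¬ G.Adj u v)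
    (hreach : (G.induce ((G.neighborSet u ∩ G.neighborSet v)ᶜ)).Reachable
      ⟨u, fun h => G.irrefl h.1⟩ ⟨v, fun h => G.irrefl h.2⟩) :
    ¬ Chordal (G ⊔ SimpleGraph.edge u v) := by
  intro hch'
  set G' := G.induce ((G.neighborSet u ∩ G.neighborSet v)ᶜ) with hG'
  set u' : ↥((G.neighborSet u ∩ G.neighborSet v)ᶜ) := ⟨u, fun h => G.irrefl h.1⟩ with hu'
  set v' : ↥((G.neighborSet u ∩ G.neighborSet v)ᶜ) := ⟨v, fun h => G.irrefl h.2⟩ with hv'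
  obtain ⟨p, hp⟩ := hreach.exists_walk_length_eq_edist
  have key : ∀ i j : ℕ, i ≤ j → j ≤ p.length →
      G'.edist (p.getVert i) (p.getVert j) = ((j - i : ℕ) : ℕ∞) :=
    fun i j hij hj => edist_getVert_shortest p hp hij hj
  have inj : ∀ i j : ℕ, i ≤ j → j ≤ p.length → p.getVert i = p.getVert j → i = j := by
    intro i j hij hj he
    have h1 := key i j hij hj
    rw [he, SimpleGraph.edist_self] at h1
    have : j - i = 0 := by exact_mod_cast h1.symm
    omega
  have adj1 : ∀ i j : ℕ, i ≤ j → j ≤ p.length →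
      G'.Adj (p.getVert i) (p.getVert j) → j = i + 1 := by
    intro i j hij hj ha
    have h1 := key i j hij hj
    rw [SimpleGraph.edist_eq_one_iff_adj.mpr ha] at h1
    have : j - i = 1 := by exact_mod_cast h1.symm
    omega
  have hd0 : p.length ≠ 0 := by
    intro h
    have e : p.getVert 0 = p.getVert p.length := by rw [h]
    rw [p.getVert_zero, p.getVert_length] at e
    exact hne (congrArg Subtype.val e)
  have hd1 : p.length ≠ 1 := by
    intro h
    have a1 : G'.Adj (p.getVert 0) (p.getVert 1) := p.adj_getVert_succ (by omega)
    rw [p.getVert_zero] at a1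
    have a1' : p.getVert 1 = v' := by rw [← h, p.getVert_length]
    rw [a1'] at a1
    exact huv a1
  have hd2 : p.length ≠ 2 := by
    intro h
    have a1 : G'.Adj (p.getVert 0) (p.getVert 1) := p.adj_getVert_succ (by omega)
    have a2 : G'.Adj (p.getVert 1) (p.getVert 2) := p.adj_getVert_succ (by omega)
    rw [p.getVert_zero] at a1
    have a2' : p.getVert 2 = v' := by rw [← h, p.getVert_length]
    rw [a2'] at a2
    exact (p.getVert 1).2 ⟨a1, a2.symm⟩
  have hd3 : 3 ≤ p.length := by omega
  -- endpoints
  have hu0 : p.getVert 0 = u' := p.getVert_zero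
  have hvd : p.getVert p.length = v' := p.getVert_length
  have val_u : ∀ i : Fin (p.length + 1), (p.getVert i.val : V) = u → i.val = 0 := by
    intro i h
    have h' : p.getVert i.val = p.getVert 0 := by
      rw [hu0]; exact Subtype.ext h
    exact (inj 0 i.val (Nat.zero_le _) (by omega) h'.symm).symm
  have val_v : ∀ i : Fin (p.length + 1), (p.getVert i.val : V) = v → i.val = p.length := by
    intro i h
    have h' : p.getVert i.val = p.getVert p.length := by
      rw [hvd]; exact Subtype.ext h
    exact inj i.val p.length (by omega) le_rfl h'
  have cyc : ∀ a b : Fin (p.length + 1), (cycleGraph (p.length + 1)).Adj a b ↔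
      (a.val = b.val + 1 ∨ b.val = a.val + 1 ∨ (a.val = 0 ∧ b.val = p.length) ∨
        (b.val = 0 ∧ a.val = p.length)) := by
    intro a b
    rw [cycleGraph_adj', fin_sub_val_eq_one' (by omega) a b, fin_sub_val_eq_one' (by omega) b a]
    tauto
  refine hch' (p.length + 1) (by omega) ⟨⟨⟨fun i => (p.getVert i.val : V), ?_⟩, ?_⟩⟩
  · intro a b h
    have h' : p.getVert a.val = p.getVert b.val := Subtype.coe_injective h
    rcases le_total a.val b.val with hab | hab
    · exact Fin.ext (inj a.val b.val hab (by omega) h')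
    · exact Fin.ext (inj b.val a.val hab (by omega) h'.symm).symm
  · intro a b
    simp only [Function.Embedding.coeFn_mk, sup_adj, edge_adj]
    rw [cyc]
    constructor
    · rintro (h | ⟨(⟨h1, h2⟩ | ⟨h1, h2⟩), -⟩)
      · have h' : G'.Adj (p.getVert a.val) (p.getVert b.val) := h
        rcases le_total a.val b.val with hab | hab
        · have := adj1 a.val b.val hab (by omega) h'
          omega
        · have := adj1 b.val a.val hab (by omega) h'.symm
          omega
      · have := val_u a h1; have := val_v b h2; omega
      · have := val_v a h1; have := val_u b h2; omega
    · rintro (h | h | ⟨h1, h2⟩ | ⟨h1, h2⟩)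
      · left
        have step : G'.Adj (p.getVert b.val) (p.getVert (b.val + 1)) :=
          p.adj_getVert_succ (by omega)
        rw [← h] at step
        exact step.symm
      · left
        have step : G'.Adj (p.getVert a.val) (p.getVert (a.val + 1)) :=
          p.adj_getVert_succ (by omega)
        rw [← h] at step
        exact step
      · right
        have ea : (p.getVert a.val : V) = u := by
          rw [h1, hu0]
        have eb : (p.getVert b.val : V) = v := by
          rw [h2, hvd]
        refine ⟨Or.inl ⟨ea, eb⟩, ?_⟩
        change (p.getVert a.val : V) ≠ (p.getVert b.val : V); rw [ea, eb]; exact hne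
      · right
        have ea : (p.getVert a.val : V) = v := by
          rw [h2, hvd]
        have eb : (p.getVert b.val : V) = u := by
          rw [h1, hu0]
        refine ⟨Or.inr ⟨ea, eb⟩, ?_⟩
        change (p.getVert a.val : V) ≠ (p.getVert b.val : V); rw [ea, eb]; exact hne.symm
end

section
/- Let G be an arbitrary graph and {u,v} a two-pair of G. Then G + {u,v} is weakly chordal if and only if G is weakly chordal. -/
open SimpleGraph

/-- `{u, v}` is a two-pair of `G`: `u` and `v` are distinct, non-adjacent, and
every induced path between them has exactly two edges. -/
def TwoPair {V : Type*} (G : SimpleGraph V) (u v : V) : Prop :=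
  u ≠ v ∧ ¬ G.Adj u v ∧ ∀ ℓ, HasInducedPath G u v ℓ → ℓ = 2

namespace TwoPairProof
variable {V : Type*} {G H H' : SimpleGraph V}


lemma cadj_iff {n : ℕ} (hn : 3 ≤ n) (i j : Fin n) :
    (cycleGraph n).Adj i j ↔
      (i.val + 1 = j.val ∨ j.val + 1 = i.val ∨ (i.val = n - 1 ∧ j.val = 0) ∨
        (j.val = n - 1 ∧ i.val = 0)) := by
  have hi := i.isLt; have hj := j.isLt
  have key : ∀ a b : ℕ, a < n → b < n → ((n - b + a) % n = 1 ↔ (b + 1 = a ∨ (a = 0 ∧ b = n - 1))) := by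
    intro a b ha hb
    rcases lt_or_ge (n - b + a) n with hx | hx
    · rw [Nat.mod_eq_of_lt hx]; omega
    · rw [Nat.mod_eq_sub_mod hx, Nat.mod_eq_of_lt (by omega)]; omega
  rw [cycleGraph_adj', Fin.sub_def, Fin.sub_def]
  simp only [Fin.val_mk]
  rw [key _ _ hi hj, key _ _ hj hi]
  omega

def rotIso {n : ℕ} [NeZero n] (k : Fin n) : cycleGraph n ≃g cycleGraph n where
  toEquiv := Equiv.addRight k
  map_rel_iff' := by
    intro i j
    simp only [Equiv.coe_addRight]
    rw [cycleGraph_adj', cycleGraph_adj']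
    have h1 : i + k - (j + k) = i - j := by open Fin.CommRing in ring
    have h2 : j + k - (i + k) = j - i := by open Fin.CommRing in ring
    rw [h1, h2]

def reflIso {n : ℕ} [NeZero n] : cycleGraph n ≃g cycleGraph n where
  toEquiv := Equiv.neg (Fin n)
  map_rel_iff' := by
    intro i j
    simp only [Equiv.neg_apply]
    rw [cycleGraph_adj', cycleGraph_adj']
    have h1 : -i - -j = j - i := by open Fin.CommRing in ring
    have h2 : -j - -i = i - j := by open Fin.CommRing in ring
    rw [h1, h2]
    tauto



lemma hip_symm {u v : V} {ℓ : ℕ} (h : HasInducedPath G u v ℓ) : HasInducedPath G v u ℓ := by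
  obtain ⟨f, h0, h1⟩ := h
  refine ⟨⟨⟨fun i => f i.rev, fun i j hij => ?_⟩, ?_⟩, ?_, ?_⟩
  · have := f.injective hij
    exact Fin.rev_injective this
  · intro i j
    show G.Adj (f i.rev) (f j.rev) ↔ _
    rw [f.map_rel_iff, pathGraph_adj, pathGraph_adj]
    have hi := i.isLt; have hj := j.isLt
    simp only [Fin.val_rev]
    omega
  · show f (Fin.rev 0) = v
    rw [Fin.rev_zero, h1]
  · show f (Fin.last ℓ).rev = u
    rw [Fin.rev_last, h0]

def arcEmb {n m : ℕ} (hn : 3 ≤ n) (hm : m + 2 ≤ n) (f : cycleGraph n ↪g H) :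
    pathGraph (m + 1) ↪g H where
  toFun i := f ⟨i.val, by omega⟩
  inj' i j hij := by
    exact Fin.ext (by simpa using f.injective hij)
  map_rel_iff' := by
    intro i j
    show H.Adj (f ⟨i.val, by omega⟩) (f ⟨j.val, by omega⟩) ↔ _
    rw [f.map_rel_iff, cadj_iff hn, pathGraph_adj]
    have hi := i.isLt; have hj := j.isLt
    simp only [Fin.val_mk]
    omega

lemma arcEmb_apply {n m : ℕ} (hn : 3 ≤ n) (hm : m + 2 ≤ n) (f : cycleGraph n ↪g H)
    (i : Fin (m + 1)) : arcEmb hn hm f i = f ⟨i.val, by omega⟩ := rfl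

lemma mkPath3 {a b c d : V}
    (hab : G.Adj a b) (hbc : G.Adj b c) (hcd : G.Adj c d)
    (nac : ¬G.Adj a c) (nad : ¬G.Adj a d) (nbd : ¬G.Adj b d)
    (dac : a ≠ c) (dad : a ≠ d) (dbd : b ≠ d) :
    HasInducedPath G a d 3 := by
  have dab := hab.ne; have dbc := hbc.ne; have dcd := hcd.ne
  refine ⟨⟨⟨![a, b, c, d], fun i j hij => ?_⟩, ?_⟩, rfl, rfl⟩
  · fin_cases i <;> fin_cases j <;> simp_all <;>
      first
        | rfl
        | (exfalso; simp_all [eq_comm])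
  · intro i j
    show G.Adj (![a, b, c, d] i) (![a, b, c, d] j) ↔ _
    have sab := hab.symm; have sbc := hbc.symm; have scd := hcd.symm
    have nca : ¬G.Adj c a := fun h => nac h.symm
    have nda : ¬G.Adj d a := fun h => nad h.symm
    have ndb : ¬G.Adj d b := fun h => nbd h.symm
    fin_cases i <;> fin_cases j <;>
      simp_all [pathGraph_adj, SimpleGraph.irrefl] <;> decide

lemma mkPath4 {a b c d e : V}
    (hab : G.Adj a b) (hbc : G.Adj b c) (hcd : G.Adj c d) (hde : G.Adj d e)
    (nac : ¬G.Adj a c) (nad : ¬G.Adj a d) (nae : ¬G.Adj a e)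
    (nbd : ¬G.Adj b d) (nbe : ¬G.Adj b e) (nce : ¬G.Adj c e)
    (dac : a ≠ c) (dad : a ≠ d) (dae : a ≠ e) (dbd : b ≠ d) (dbe : b ≠ e) (dce : c ≠ e) :
    HasInducedPath G a e 4 := by
  have dab := hab.ne; have dbc := hbc.ne; have dcd := hcd.ne; have dde := hde.ne
  refine ⟨⟨⟨![a, b, c, d, e], fun i j hij => ?_⟩, ?_⟩, rfl, rfl⟩
  · fin_cases i <;> fin_cases j <;> simp_all <;>
      first
        | rfl
        | (exfalso; simp_all [eq_comm])
  · intro i j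
    show G.Adj (![a, b, c, d, e] i) (![a, b, c, d, e] j) ↔ _
    have sab := hab.symm; have sbc := hbc.symm; have scd := hcd.symm; have sde := hde.symm
    have nca : ¬G.Adj c a := fun h => nac h.symm
    have nda : ¬G.Adj d a := fun h => nad h.symm
    have nea : ¬G.Adj e a := fun h => nae h.symm
    have ndb : ¬G.Adj d b := fun h => nbd h.symm
    have neb : ¬G.Adj e b := fun h => nbe h.symm
    have nec : ¬G.Adj e c := fun h => nce h.symm
    fin_cases i <;> fin_cases j <;>
      simp_all [pathGraph_adj, SimpleGraph.irrefl] <;> decide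

lemma transfer {u v : V}
    (hAdj : ∀ a b : V, ¬(a = u ∧ b = v ∨ a = v ∧ b = u) → (H.Adj a b ↔ H'.Adj a b))
    {n : ℕ} (f : cycleGraph n ↪g H)
    (hf : (∀ i, f i ≠ u) ∨ (∀ i, f i ≠ v)) : Nonempty (cycleGraph n ↪g H') := by
  refine ⟨⟨f.toEmbedding, fun {i j} => ?_⟩⟩
  have hp : ¬(f i = u ∧ f j = v ∨ f i = v ∧ f j = u) := by
    rcases hf with hh | hh
    · rintro (⟨h1, _⟩ | ⟨_, h2⟩)
      exacts [hh i h1, hh j h2]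
    · rintro (⟨_, h2⟩ | ⟨h1, _⟩)
      exacts [hh j h2, hh i h1]
  exact (hAdj (f i) (f j) hp).symm.trans f.map_rel_iff



lemma val_neg' {n : ℕ} [NeZero n] {c : Fin n} (hc : c ≠ 0) : (-c).val = n - c.val := by
  have h4 := c.isLt
  have h5 : c.val ≠ 0 := fun h => hc (Fin.ext (by rw [h, Fin.val_zero]))
  rw [Fin.neg_def]
  simp only [Fin.val_mk]
  rw [Nat.mod_eq_of_lt (by omega)]

lemma rotIso_apply {n : ℕ} [NeZero n] (k i : Fin n) : rotIso k i = i + k := rfl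
lemma reflIso_apply {n : ℕ} [NeZero n] (i : Fin n) : (reflIso : cycleGraph n ≃g cycleGraph n) i = -i := rfl

lemma rotate {n : ℕ} [NeZero n] {K : SimpleGraph V} (f : cycleGraph n ↪g K) {u v : V}
    (ha : ∃ a, f a = u) (hb : ∃ b, f b = v) (huv : u ≠ v) :
    ∃ (g : cycleGraph n ↪g K) (c : Fin n), g 0 = u ∧ g c = v ∧ c ≠ 0 := by
  obtain ⟨a, ha⟩ := ha; obtain ⟨b, hb⟩ := hb
  refine ⟨f.comp (rotIso a).toEmbedding, b - a, ?_, ?_, ?_⟩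
  · show f (rotIso a 0) = u
    rw [rotIso_apply, zero_add, ha]
  · show f (rotIso a (b - a)) = v
    rw [rotIso_apply, sub_add_cancel, hb]
  · intro hba
    rw [sub_eq_zero] at hba
    exact huv (by rw [← ha, ← hb, hba])

/-- reflect so that the position of `v` moves from `c` to `-c`. -/
lemma reflect {n : ℕ} [NeZero n] {K : SimpleGraph V} (g : cycleGraph n ↪g K) {u v : V} {c : Fin n}
    (h0 : g 0 = u) (hc : g c = v) :
    ∃ g₂ : cycleGraph n ↪g K, g₂ 0 = u ∧ g₂ (-c) = v := by
  refine ⟨g.comp (reflIso.toEmbedding), ?_, ?_⟩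
  · show g (reflIso 0) = u
    rw [reflIso_apply, neg_zero, h0]
  · show g (reflIso (-c)) = v
    rw [reflIso_apply, neg_neg, hc]

lemma arcPath {n m : ℕ} (hn : 3 ≤ n) (hm : m + 2 ≤ n) {H : SimpleGraph V} (g : cycleGraph n ↪g H)
    {u v : V} (h0 : g ⟨0, by omega⟩ = u) (hm' : g ⟨m, by omega⟩ = v) : HasInducedPath H u v m := by
  refine ⟨arcEmb hn hm g, ?_, ?_⟩
  · rw [arcEmb_apply]
    exact (congrArg (fun t => g t) (Fin.ext (by simp))).trans h0
  · rw [arcEmb_apply]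
    exact (congrArg (fun t => g t) (Fin.ext (by simp [Fin.last]))).trans hm'

lemma subCycle {n : ℕ} [NeZero n] (hn : 5 ≤ n) {K L : SimpleGraph V} (g : cycleGraph n ↪g K)
    {c : Fin n} (hc2 : 2 ≤ c.val) (hcn : c.val ≤ n - 2)
    (hL : ∀ i j : Fin n, i ≠ j →
      (L.Adj (g i) (g j) ↔ ((cycleGraph n).Adj i j ∨ (i = 0 ∧ j = c) ∨ (i = c ∧ j = 0)))) :
    Nonempty (cycleGraph (c.val + 1) ↪g L) := by
  refine ⟨⟨⟨fun i => g ⟨i.val, by omega⟩, fun i j hij => ?_⟩, ?_⟩⟩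
  · exact Fin.ext (by simpa using g.injective hij)
  · intro i j
    show L.Adj (g ⟨i.val, by omega⟩) (g ⟨j.val, by omega⟩) ↔ _
    by_cases hij : i = j
    · subst hij
      simp [SimpleGraph.irrefl]
    · have hne : (⟨i.val, by omega⟩ : Fin n) ≠ ⟨j.val, by omega⟩ := by
        intro hh
        exact hij (Fin.ext (by simpa using hh))
      have hv : i.val ≠ j.val := fun hh => hij (Fin.ext hh)
      rw [hL _ _ hne, cadj_iff (by omega), cadj_iff (n := c.val + 1) (by omega)]
      simp only [Fin.ext_iff, Fin.val_mk, Fin.val_zero]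
      have hi := i.isLt; have hj := j.isLt
      omega


lemma cadj_zero_iff {n : ℕ} [NeZero n] (hn : 3 ≤ n) (c : Fin n) :
    (cycleGraph n).Adj 0 c ↔ (c.val = 1 ∨ c.val = n - 1) := by
  rw [cadj_iff hn]
  have hc := c.isLt
  have h0 : ((0 : Fin n) : ℕ) = 0 := Fin.val_zero n
  rw [h0]
  omega


lemma gcong {n : ℕ} {K : SimpleGraph V} (g : cycleGraph n ↪g K) {a b : Fin n}
    (h : a.val = b.val) : g a = g b := congrArg (fun t => g t) (Fin.ext h)

end TwoPairProof

open TwoPairProof in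
set_option maxHeartbeats 2000000 in
/-- If `{u,v}` is a two-pair of `G`, then `G + {u,v}` is weakly chordal iff `G`
is weakly chordal. -/
theorem add_twoPair_weaklyChordal_iff {V : Type*} (G : SimpleGraph V) (u v : V)
    (h : TwoPair G u v) :
    WeaklyChordal (G ⊔ SimpleGraph.edge u v) ↔ WeaklyChordal G := by
  classical
  obtain ⟨huv, hnadj, htp⟩ := h
  have hG'uv : (G ⊔ edge u v).Adj u v := by
    rw [sup_adj, edge_adj]
    exact Or.inr ⟨Or.inl ⟨rfl, rfl⟩, huv⟩
  have hGadj : ∀ a b : V, G.Adj a b ↔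
      ((G ⊔ edge u v).Adj a b ∧ ¬(a = u ∧ b = v ∨ a = v ∧ b = u)) := by
    intro a b
    rw [sup_adj, edge_adj]
    constructor
    · intro hab
      refine ⟨Or.inl hab, ?_⟩
      rintro (⟨rfl, rfl⟩ | ⟨rfl, rfl⟩)
      exacts [hnadj hab, hnadj hab.symm]
    · rintro ⟨hab | ⟨hp, _⟩, hnp⟩
      · exact hab
      · exact absurd hp hnp
  have hIff : ∀ a b : V, ¬(a = u ∧ b = v ∨ a = v ∧ b = u) →
      (G.Adj a b ↔ (G ⊔ edge u v).Adj a b) := by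
    intro a b hp
    constructor
    · exact fun hg => ((hGadj a b).mp hg).1
    · exact fun hg => (hGadj a b).mpr ⟨hg, hp⟩
  have hIffC : ∀ a b : V, ¬(a = u ∧ b = v ∨ a = v ∧ b = u) →
      (Gᶜ.Adj a b ↔ (G ⊔ edge u v)ᶜ.Adj a b) := by
    intro a b hp
    rw [compl_adj, compl_adj, hIff a b hp]
  have hIff' : ∀ a b : V, ¬(a = u ∧ b = v ∨ a = v ∧ b = u) →
      ((G ⊔ edge u v).Adj a b ↔ G.Adj a b) := fun a b hp => (hIff a b hp).symm
  have hIffC' : ∀ a b : V, ¬(a = u ∧ b = v ∨ a = v ∧ b = u) →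
      ((G ⊔ edge u v)ᶜ.Adj a b ↔ Gᶜ.Adj a b) := fun a b hp => (hIffC a b hp).symm
  constructor
  · -- `G + uv` weakly chordal → `G` weakly chordal
    rintro ⟨hc1, hc2⟩
    constructor
    · -- no long induced cycle in `G`
      intro n hn hcyc
      obtain ⟨f⟩ := hcyc
      haveI : NeZero n := ⟨by omega⟩
      by_cases hu : ∃ i, f i = u
      · by_cases hv : ∃ i, f i = v
        · obtain ⟨g, c, hg0, hgc, hc0⟩ := rotate f hu hv huv
          have hc0' : c.val ≠ 0 := fun hh => hc0 (Fin.ext (by rw [hh, Fin.val_zero]))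
          have hclt := c.isLt
          have hnc : ¬(cycleGraph n).Adj 0 c := fun hadj =>
            hnadj (by rw [← hg0, ← hgc]; exact g.map_rel_iff.mpr hadj)
          rw [cadj_zero_iff (by omega)] at hnc
          have hp1 : HasInducedPath G u v c.val := by
            refine arcPath (by omega) (by omega) g ?_ ?_
            · exact (gcong g (by simp [Fin.val_zero])).trans hg0
            · exact (gcong g rfl).trans hgc
          have hc2v : c.val = 2 := htp _ hp1
          have hp2 : HasInducedPath G v u (n - c.val) := by
            refine arcPath (by omega) (by omega) (g.comp (rotIso c).toEmbedding) ?_ ?_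
            · show g (rotIso c _) = v
              rw [rotIso_apply]
              refine (gcong g ?_).trans hgc
              rw [Fin.val_add]
              simp [Nat.mod_eq_of_lt hclt]
            · show g (rotIso c _) = u
              rw [rotIso_apply]
              refine (gcong g ?_).trans hg0
              rw [Fin.val_add]
              simp only [Fin.val_mk, Fin.val_zero]
              have hsum : n - c.val + c.val = n := by omega
              rw [hsum, Nat.mod_self]
          have := htp _ (hip_symm hp2)
          omega
        · push_neg at hv
          exact hc1 n hn (transfer hIff f (Or.inr hv))
      · push_neg at hu
        exact hc1 n hn (transfer hIff f (Or.inl hu))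
    · -- no long induced cycle in `Gᶜ`
      intro n hn hcyc
      obtain ⟨f⟩ := hcyc
      haveI : NeZero n := ⟨by omega⟩
      by_cases hu : ∃ i, f i = u
      · by_cases hv : ∃ i, f i = v
        · obtain ⟨g, c, hg0, hgc, hc0⟩ := rotate f hu hv huv
          have hc0' : c.val ≠ 0 := fun hh => hc0 (Fin.ext (by rw [hh, Fin.val_zero]))
          have hclt := c.isLt
          have hcadj : (cycleGraph n).Adj 0 c :=
            g.map_rel_iff.mp (by rw [hg0, hgc]; exact (compl_adj G u v).mpr ⟨huv, hnadj⟩)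
          rw [cadj_zero_iff (by omega)] at hcadj
          obtain ⟨g₂, hg₂0, d, hg₂d, hd⟩ : ∃ g₂ : cycleGraph n ↪g Gᶜ,
              g₂ 0 = u ∧ ∃ d : Fin n, g₂ d = v ∧ d.val = n - 1 := by
            rcases (show c.val = 1 ∨ c.val = n - 1 by omega) with h1 | h1
            · obtain ⟨g₂, h₂0, h₂c⟩ := reflect g hg0 hgc
              exact ⟨g₂, h₂0, -c, h₂c, by rw [val_neg' hc0, h1]⟩
            · exact ⟨g, hg0, c, hgc, h1⟩
          have hGA : ∀ i j : Fin n, i ≠ j →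
              (G.Adj (g₂ i) (g₂ j) ↔ ¬(cycleGraph n).Adj i j) := by
            intro i j hij
            have hne : g₂ i ≠ g₂ j := fun hh => hij (g₂.injective hh)
            have hK : Gᶜ.Adj (g₂ i) (g₂ j) ↔ (cycleGraph n).Adj i j := g₂.map_rel_iff
            rw [compl_adj] at hK
            tauto
          have key : ∀ (p q : ℕ) (hp : p < n) (hq : q < n), p ≠ q →
              ¬(p + 1 = q ∨ q + 1 = p ∨ (p = n - 1 ∧ q = 0) ∨ (q = n - 1 ∧ p = 0)) →
              G.Adj (g₂ ⟨p, hp⟩) (g₂ ⟨q, hq⟩) := by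
            intro p q hp hq hpq hna
            refine (hGA _ _ (fun hh => hpq (by simpa using congrArg Fin.val hh))).mpr ?_
            rw [cadj_iff (by omega)]
            simpa using hna
          have keyn : ∀ (p q : ℕ) (hp : p < n) (hq : q < n), p ≠ q →
              (p + 1 = q ∨ q + 1 = p ∨ (p = n - 1 ∧ q = 0) ∨ (q = n - 1 ∧ p = 0)) →
              ¬G.Adj (g₂ ⟨p, hp⟩) (g₂ ⟨q, hq⟩) := by
            intro p q hp hq hpq ha hadj
            refine (hGA _ _ (fun hh => hpq (by simpa using congrArg Fin.val hh))).mp hadj ?_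
            rw [cadj_iff (by omega)]
            simpa using ha
          have keyd : ∀ (p q : ℕ) (hp : p < n) (hq : q < n), p ≠ q →
              g₂ ⟨p, hp⟩ ≠ g₂ ⟨q, hq⟩ := fun p q hp hq hpq hh =>
            hpq (by simpa using congrArg Fin.val (g₂.injective hh))
          have hw0 : g₂ ⟨0, by omega⟩ = u := (gcong g₂ (by simp [Fin.val_zero])).trans hg₂0
          have hw3 : g₂ ⟨n - 1, by omega⟩ = v := (gcong g₂ (by simp [hd])).trans hg₂d
          have hpath : HasInducedPath G u v 3 := by
            rw [← hw0, ← hw3]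
            exact mkPath3
              (key 0 (n - 2) (by omega) (by omega) (by omega) (by omega))
              (key (n - 2) 1 (by omega) (by omega) (by omega) (by omega))
              (key 1 (n - 1) (by omega) (by omega) (by omega) (by omega))
              (keyn 0 1 (by omega) (by omega) (by omega) (by omega))
              (keyn 0 (n - 1) (by omega) (by omega) (by omega) (by omega))
              (keyn (n - 2) (n - 1) (by omega) (by omega) (by omega) (by omega))
              (keyd 0 1 (by omega) (by omega) (by omega))
              (keyd 0 (n - 1) (by omega) (by omega) (by omega))
              (keyd (n - 2) (n - 1) (by omega) (by omega) (by omega))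
          have := htp _ hpath
          omega
        · push_neg at hv
          exact hc2 n hn (transfer hIffC f (Or.inr hv))
      · push_neg at hu
        exact hc2 n hn (transfer hIffC f (Or.inl hu))
  · -- `G` weakly chordal → `G + uv` weakly chordal
    rintro ⟨hc1, hc2⟩
    constructor
    · -- no long induced cycle in `G + uv`
      intro n hn hcyc
      obtain ⟨f⟩ := hcyc
      haveI : NeZero n := ⟨by omega⟩
      by_cases hu : ∃ i, f i = u
      · by_cases hv : ∃ i, f i = v
        · obtain ⟨g, c, hg0, hgc, hc0⟩ := rotate f hu hv huv
          have hc0' : c.val ≠ 0 := fun hh => hc0 (Fin.ext (by rw [hh, Fin.val_zero]))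
          have hclt := c.isLt
          have hcadj : (cycleGraph n).Adj 0 c :=
            g.map_rel_iff.mp (by rw [hg0, hgc]; exact hG'uv)
          rw [cadj_zero_iff (by omega)] at hcadj
          obtain ⟨g₂, hg₂0, d, hg₂d, hd⟩ : ∃ g₂ : cycleGraph n ↪g (G ⊔ edge u v),
              g₂ 0 = u ∧ ∃ d : Fin n, g₂ d = v ∧ d.val = n - 1 := by
            rcases (show c.val = 1 ∨ c.val = n - 1 by omega) with h1 | h1
            · obtain ⟨g₂, h₂0, h₂c⟩ := reflect g hg0 hgc
              exact ⟨g₂, h₂0, -c, h₂c, by rw [val_neg' hc0, h1]⟩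
            · exact ⟨g, hg0, c, hgc, h1⟩
          have hgu : ∀ i : Fin n, g₂ i = u ↔ i = 0 := fun i =>
            ⟨fun hh => g₂.injective (hh.trans hg₂0.symm), fun hh => hh ▸ hg₂0⟩
          have hgv : ∀ i : Fin n, g₂ i = v ↔ i = d := fun i =>
            ⟨fun hh => g₂.injective (hh.trans hg₂d.symm), fun hh => hh ▸ hg₂d⟩
          obtain ⟨m, rfl⟩ : ∃ m, n = m + 1 := ⟨n - 1, by omega⟩
          have hdm : d.val = m := by omega
          have hpath : HasInducedPath G u v m := by
            refine ⟨⟨⟨fun i => g₂ i, fun i j hh => g₂.injective hh⟩, ?_⟩, ?_, ?_⟩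
            · intro i j
              show G.Adj (g₂ i) (g₂ j) ↔ _
              by_cases hij : i = j
              · subst hij
                simp [SimpleGraph.irrefl]
              · rw [hGadj, pathGraph_adj]
                have hK : (G ⊔ edge u v).Adj (g₂ i) (g₂ j) ↔ (cycleGraph (m + 1)).Adj i j :=
                  g₂.map_rel_iff
                rw [hK, cadj_iff (by omega)]
                simp only [hgu, hgv]
                simp only [Fin.ext_iff, Fin.val_zero]
                have hi := i.isLt; have hj := j.isLt
                omega
            · exact hg₂0
            · show g₂ (Fin.last m) = v
              refine (gcong g₂ ?_).trans hg₂d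
              simp [Fin.last, hdm]
          have := htp _ hpath
          omega
        · push_neg at hv
          exact hc1 n hn (transfer hIff' f (Or.inr hv))
      · push_neg at hu
        exact hc1 n hn (transfer hIff' f (Or.inl hu))
    · -- no long induced cycle in `(G + uv)ᶜ`
      intro n hn hcyc
      obtain ⟨f⟩ := hcyc
      haveI : NeZero n := ⟨by omega⟩
      by_cases hu : ∃ i, f i = u
      · by_cases hv : ∃ i, f i = v
        · obtain ⟨g, c, hg0, hgc, hc0⟩ := rotate f hu hv huv
          have hc0' : c.val ≠ 0 := fun hh => hc0 (Fin.ext (by rw [hh, Fin.val_zero]))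
          have hclt := c.isLt
          have hnc : ¬(cycleGraph n).Adj 0 c := by
            intro hadj
            have hh := g.map_rel_iff.mpr hadj
            rw [hg0, hgc, compl_adj] at hh
            exact hh.2 hG'uv
          rw [cadj_zero_iff (by omega)] at hnc
          have hcb2 : 2 ≤ c.val := by omega
          have hcbn : c.val ≤ n - 2 := by omega
          have hgu : ∀ i : Fin n, g i = u ↔ i = 0 := fun i =>
            ⟨fun hh => g.injective (hh.trans hg0.symm), fun hh => hh ▸ hg0⟩
          have hgv : ∀ i : Fin n, g i = v ↔ i = c := fun i =>
            ⟨fun hh => g.injective (hh.trans hgc.symm), fun hh => hh ▸ hgc⟩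
          have hL : ∀ i j : Fin n, i ≠ j → (Gᶜ.Adj (g i) (g j) ↔
              ((cycleGraph n).Adj i j ∨ (i = 0 ∧ j = c) ∨ (i = c ∧ j = 0))) := by
            intro i j hij
            have hne : g i ≠ g j := fun hh => hij (g.injective hh)
            have hK : (G ⊔ edge u v)ᶜ.Adj (g i) (g j) ↔ (cycleGraph n).Adj i j := g.map_rel_iff
            rw [compl_adj] at hK
            rw [compl_adj, hGadj]
            simp only [hgu, hgv]
            tauto
          have hc3 : c.val ≤ 3 := by
            by_contra hgt
            push_neg at hgt
            exact hc2 (c.val + 1) (by omega) (subCycle (by omega) g hcb2 hcbn hL)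
          have hnegv : (-c).val = n - c.val := val_neg' hc0
          have hL2 : ∀ i j : Fin n, i ≠ j →
              (Gᶜ.Adj ((g.comp (rotIso c).toEmbedding) i) ((g.comp (rotIso c).toEmbedding) j) ↔
                ((cycleGraph n).Adj i j ∨ (i = 0 ∧ j = -c) ∨ (i = -c ∧ j = 0))) := by
            intro i j hij
            show Gᶜ.Adj (g (rotIso c i)) (g (rotIso c j)) ↔ _
            have hrot : (cycleGraph n).Adj (rotIso c i) (rotIso c j) ↔
                (cycleGraph n).Adj i j := (rotIso c).map_rel_iff
            rw [rotIso_apply, rotIso_apply] at hrot ⊢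
            rw [hL (i + c) (j + c) (fun hh => hij (by
              have := congrArg (fun t => t - c) hh
              simpa using this))]
            rw [hrot]
            have e1 : ∀ x : Fin n, x + c = 0 ↔ x = -c := fun x => by
              constructor <;> intro hh <;> (open Fin.CommRing in linear_combination hh)
            have e2 : ∀ x : Fin n, x + c = c ↔ x = 0 := fun x => by
              constructor <;> intro hh <;> (open Fin.CommRing in linear_combination hh)
            simp only [e1, e2]
            tauto
          have hnc3 : n - c.val ≤ 3 := by
            by_contra hgt
            push_neg at hgt
            have hcyc2 := subCycle (by omega) (g.comp (rotIso c).toEmbedding) (c := -c)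
              (by rw [hnegv]; omega) (by rw [hnegv]; omega) hL2
            rw [hnegv] at hcyc2
            exact hc2 (n - c.val + 1) (by omega) hcyc2
          have hGA : ∀ i j : Fin n, i ≠ j → (G.Adj (g i) (g j) ↔
              (¬(cycleGraph n).Adj i j ∧ ¬((i = 0 ∧ j = c) ∨ (i = c ∧ j = 0)))) := by
            intro i j hij
            have hne : g i ≠ g j := fun hh => hij (g.injective hh)
            have hcompl := hL i j hij
            rw [compl_adj] at hcompl
            tauto
          have key : ∀ (p q : ℕ) (hp : p < n) (hq : q < n), p ≠ q →
              ¬(p + 1 = q ∨ q + 1 = p ∨ (p = n - 1 ∧ q = 0) ∨ (q = n - 1 ∧ p = 0)) →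
              ¬((p = 0 ∧ q = c.val) ∨ (p = c.val ∧ q = 0)) →
              G.Adj (g ⟨p, hp⟩) (g ⟨q, hq⟩) := by
            intro p q hp hq hpq hna hnp
            refine (hGA _ _ (fun hh => hpq (by simpa using congrArg Fin.val hh))).mpr ⟨?_, ?_⟩
            · rw [cadj_iff (by omega)]
              simpa using hna
            · simp only [Fin.ext_iff, Fin.val_mk, Fin.val_zero]
              exact hnp
          have keyn : ∀ (p q : ℕ) (hp : p < n) (hq : q < n), p ≠ q →
              ((p + 1 = q ∨ q + 1 = p ∨ (p = n - 1 ∧ q = 0) ∨ (q = n - 1 ∧ p = 0)) ∨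
                ((p = 0 ∧ q = c.val) ∨ (p = c.val ∧ q = 0))) →
              ¬G.Adj (g ⟨p, hp⟩) (g ⟨q, hq⟩) := by
            intro p q hp hq hpq ha hadj
            have hres := (hGA _ _ (fun hh => hpq (by simpa using congrArg Fin.val hh))).mp hadj
            rcases ha with ha | ha
            · exact hres.1 (by rw [cadj_iff (by omega)]; simpa using ha)
            · refine hres.2 ?_
              simp only [Fin.ext_iff, Fin.val_mk, Fin.val_zero]
              exact ha
          have keyd : ∀ (p q : ℕ) (hp : p < n) (hq : q < n), p ≠ q →
              g ⟨p, hp⟩ ≠ g ⟨q, hq⟩ := fun p q hp hq hpq hh =>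
            hpq (by simpa using congrArg Fin.val (g.injective hh))
          have hw0 : g ⟨0, by omega⟩ = u := (gcong g (by simp [Fin.val_zero])).trans hg0
          have hwc : g ⟨c.val, by omega⟩ = v := (gcong g rfl).trans hgc
          rcases (show (n = 5 ∧ c.val = 2) ∨ (n = 5 ∧ c.val = 3) ∨ (n = 6 ∧ c.val = 3) by omega)
            with ⟨hn5, hcv⟩ | ⟨hn5, hcv⟩ | ⟨hn5, hcv⟩
          · -- n = 5, c = 2 : path 0 - 3 - 1 - 4 - 2
            have hpath : HasInducedPath G u v 4 := by
              obtain ⟨pf, p0, pl⟩ := mkPath4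
                (key 0 3 (by omega) (by omega) (by omega) (by omega) (by omega))
                (key 3 1 (by omega) (by omega) (by omega) (by omega) (by omega))
                (key 1 4 (by omega) (by omega) (by omega) (by omega) (by omega))
                (key 4 c.val (by omega) (by omega) (by omega) (by omega) (by omega))
                (keyn 0 1 (by omega) (by omega) (by omega) (by omega))
                (keyn 0 4 (by omega) (by omega) (by omega) (by omega))
                (keyn 0 c.val (by omega) (by omega) (by omega) (by omega))
                (keyn 3 4 (by omega) (by omega) (by omega) (by omega))
                (keyn 3 c.val (by omega) (by omega) (by omega) (by omega))
                (keyn 1 c.val (by omega) (by omega) (by omega) (by omega))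
                (keyd 0 1 (by omega) (by omega) (by omega))
                (keyd 0 4 (by omega) (by omega) (by omega))
                (keyd 0 c.val (by omega) (by omega) (by omega))
                (keyd 3 4 (by omega) (by omega) (by omega))
                (keyd 3 c.val (by omega) (by omega) (by omega))
                (keyd 1 c.val (by omega) (by omega) (by omega))
              exact ⟨pf, p0.trans hw0, pl.trans hwc⟩
            exact absurd (htp _ hpath) (by omega)
          · -- n = 5, c = 3 : path 0 - 2 - 4 - 1 - 3
            have hpath : HasInducedPath G u v 4 := by
              obtain ⟨pf, p0, pl⟩ := mkPath4
                (key 0 2 (by omega) (by omega) (by omega) (by omega) (by omega))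
                (key 2 4 (by omega) (by omega) (by omega) (by omega) (by omega))
                (key 4 1 (by omega) (by omega) (by omega) (by omega) (by omega))
                (key 1 c.val (by omega) (by omega) (by omega) (by omega) (by omega))
                (keyn 0 4 (by omega) (by omega) (by omega) (by omega))
                (keyn 0 1 (by omega) (by omega) (by omega) (by omega))
                (keyn 0 c.val (by omega) (by omega) (by omega) (by omega))
                (keyn 2 1 (by omega) (by omega) (by omega) (by omega))
                (keyn 2 c.val (by omega) (by omega) (by omega) (by omega))
                (keyn 4 c.val (by omega) (by omega) (by omega) (by omega))
                (keyd 0 4 (by omega) (by omega) (by omega))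
                (keyd 0 1 (by omega) (by omega) (by omega))
                (keyd 0 c.val (by omega) (by omega) (by omega))
                (keyd 2 1 (by omega) (by omega) (by omega))
                (keyd 2 c.val (by omega) (by omega) (by omega))
                (keyd 4 c.val (by omega) (by omega) (by omega))
              exact ⟨pf, p0.trans hw0, pl.trans hwc⟩
            exact absurd (htp _ hpath) (by omega)
          · -- n = 6, c = 3 : path 0 - 2 - 5 - 3
            have hpath : HasInducedPath G u v 3 := by
              obtain ⟨pf, p0, pl⟩ := mkPath3
                (key 0 2 (by omega) (by omega) (by omega) (by omega) (by omega))
                (key 2 5 (by omega) (by omega) (by omega) (by omega) (by omega))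
                (key 5 c.val (by omega) (by omega) (by omega) (by omega) (by omega))
                (keyn 0 5 (by omega) (by omega) (by omega) (by omega))
                (keyn 0 c.val (by omega) (by omega) (by omega) (by omega))
                (keyn 2 c.val (by omega) (by omega) (by omega) (by omega))
                (keyd 0 5 (by omega) (by omega) (by omega))
                (keyd 0 c.val (by omega) (by omega) (by omega))
                (keyd 2 c.val (by omega) (by omega) (by omega))
              exact ⟨pf, p0.trans hw0, pl.trans hwc⟩
            exact absurd (htp _ hpath) (by omega)
        · push_neg at hv
          exact hc2 n hn (transfer hIffC' f (Or.inr hv))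
      · push_neg at hu
        exact hc2 n hn (transfer hIffC' f (Or.inl hu))
end

section
/- If u and v are non-adjacent vertices of a graph G with a common neighbor, and every induced path between u and v has length exactly 2, then adding the edge uv creates no new induced cycle of length 5 or more in G. -/
open SimpleGraph

lemma cyc_adj_iff {m : ℕ} (hm : 1 ≤ m) (a b : Fin (m+1)) :
    (cycleGraph (m+1)).Adj a b ↔ (a = b + 1 ∨ b = a + 1) := by
  have key : ∀ x y : Fin (m+1), (x - y).val = 1 ↔ x = y + 1 := fun x y => by
    rw [← sub_eq_iff_eq_add', Fin.ext_iff, Fin.val_one', Nat.mod_eq_of_lt (by omega)]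
  rw [cycleGraph_adj', key, key]

/-- reflection automorphism of the cycle graph -/
def cycNeg (n : ℕ) [NeZero n] : cycleGraph n ≃g cycleGraph n where
  toEquiv := Equiv.neg (Fin n)
  map_rel_iff' := by
    intro a b
    simp only [Equiv.neg_apply, cycleGraph_adj', neg_sub_neg]
    tauto

lemma aux_path {V : Type*} (G : SimpleGraph V) (u v : V) (huv : ¬ G.Adj u v)
    {m : ℕ} (hm : 4 ≤ m)
    (f : cycleGraph (m+1) ↪g (G ⊔ SimpleGraph.edge u v))
    (i : Fin (m+1)) (hu : f i = u) (hv : f (i - 1) = v) :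
    (∃ q : SimpleGraph.pathGraph (m + 1) ↪g G, q 0 = u ∧ q (Fin.last m) = v) := by
  have hlast : (Fin.last m : Fin (m+1)) = -1 := by
    rw [Fin.ext_iff, Fin.val_last, Fin.coe_neg_one]
  have hv' : f (i + -1) = v := by rw [← sub_eq_add_neg]; exact hv
  have hui : ∀ a : Fin (m+1), f (i + a) = u ↔ a = 0 := fun a => by
    constructor
    · intro h
      have h2 : i + a = i := f.injective (h.trans hu.symm)
      simpa using h2
    · rintro rfl; simpa using hu
  have hvi : ∀ a : Fin (m+1), f (i + a) = v ↔ a = -1 := fun a => by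
    constructor
    · intro h; exact add_left_cancel (f.injective (h.trans hv'.symm))
    · rintro rfl; exact hv'
  have hcyc : ∀ a b : Fin (m+1), (cycleGraph (m+1)).Adj (i+a) (i+b) ↔ (a = b+1 ∨ b = a+1) := by
    intro a b
    rw [cyc_adj_iff (by omega)]
    constructor
    · rintro (h | h)
      · left; exact add_left_cancel (by rw [h, add_assoc])
      · right; exact add_left_cancel (by rw [h, add_assoc])
    · rintro (rfl | rfl)
      · left; rw [add_assoc]
      · right; rw [add_assoc]
  refine ⟨⟨⟨fun k => f (i + k), fun a b h => add_left_cancel (f.injective h)⟩, ?_⟩, ?_, ?_⟩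
  case refine_2 => show f (i + 0) = u; simpa using hu
  case refine_3 => show f (i + Fin.last m) = v; rw [hlast]; exact hv'
  intro a b
  show G.Adj (f (i + a)) (f (i + b)) ↔ _
  rw [pathGraph_adj]
  constructor
  · intro h
    have hc : a = b + 1 ∨ b = a + 1 := (hcyc a b).mp (f.map_rel_iff.mp (Or.inl h))
    rcases hc with rfl | rfl
    · have hb : b ≠ Fin.last m := by
        rintro rfl
        rw [Fin.last_add_one] at h
        rw [(hui 0).mpr rfl, hlast, hv'] at h
        exact huv h
      right; rw [Fin.val_add_one, if_neg hb]
    · have ha : a ≠ Fin.last m := by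
        rintro rfl
        rw [Fin.last_add_one] at h
        rw [(hui 0).mpr rfl, hlast, hv'] at h
        exact huv h.symm
      left; rw [Fin.val_add_one, if_neg ha]
  · intro h
    have hc : a = b + 1 ∨ b = a + 1 := by
      rcases h with h | h
      · right
        rw [Fin.ext_iff, Fin.val_add_one, if_neg (by rw [Fin.ext_iff, Fin.val_last]; omega)]
        omega
      · left
        rw [Fin.ext_iff, Fin.val_add_one, if_neg (by rw [Fin.ext_iff, Fin.val_last]; omega)]
        omega
    have hsup := f.map_rel_iff.mpr ((hcyc a b).mpr hc)
    rcases hsup with hG | hE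
    · exact hG
    · exfalso
      rw [edge_adj] at hE
      rcases hE.1 with ⟨h1, h2⟩ | ⟨h1, h2⟩
      · rw [hui] at h1; rw [hvi] at h2
        subst h1 h2
        simp [Fin.coe_neg_one] at h
        omega
      · rw [hvi] at h1; rw [hui] at h2
        subst h1 h2
        simp [Fin.coe_neg_one] at h
        omega

/-- If `u` and `v` are non-adjacent, have a common neighbor, and every induced
`u`–`v` path in `G` has length exactly 2, then every induced cycle of length 5
or more of `G + uv` is already an induced cycle of `G` (as the same cycle). -/
theorem add_edge_no_new_long_induced_cycle {V : Type*} (G : SimpleGraph V) (u v : V)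
    (hne : u ≠ v) (huv : ¬ G.Adj u v)
    (hcn : (G.neighborSet u ∩ G.neighborSet v).Nonempty)
    (htp : ∀ ℓ, HasInducedPath G u v ℓ → ℓ = 2) :
    ∀ n, 5 ≤ n → ∀ f : SimpleGraph.cycleGraph n ↪g (G ⊔ SimpleGraph.edge u v),
      ∃ g : SimpleGraph.cycleGraph n ↪g G, ∀ i, g i = f i := by
  intro n hn f
  obtain ⟨m, rfl⟩ : ∃ m, n = m + 1 := ⟨n - 1, by omega⟩
  have hm : 4 ≤ m := by omega
  by_cases hc : (∃ i, f i = u) ∧ (∃ j, f j = v)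
  · exfalso
    obtain ⟨⟨i, hi⟩, j, hj⟩ := hc
    have hsup : (G ⊔ SimpleGraph.edge u v).Adj (f i) (f j) := by
      rw [hi, hj]; right; rw [edge_adj]; exact ⟨Or.inl ⟨rfl, rfl⟩, hne⟩
    have hadj := (cyc_adj_iff (by omega) i j).mp (f.map_rel_iff.mp hsup)
    rcases hadj with h | h
    · have hv : f (i - 1) = v := by
        rw [h]; simpa using hj
      have := htp m (aux_path G u v huv hm f i hi hv)
      omega
    · haveI : NeZero (m+1) := ⟨by omega⟩
      set f' := f.comp (cycNeg (m+1)).toEmbedding with hf'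
      have hneg : ∀ x, f' x = f (-x) := fun x => rfl
      have hu' : f' (-i) = u := by rw [hneg, neg_neg, hi]
      have hv' : f' (-i - 1) = v := by
        rw [hneg, neg_sub, sub_neg_eq_add, add_comm 1 i, ← h, hj]
      have := htp m (aux_path G u v huv hm f' (-i) hu' hv')
      omega
  · refine ⟨⟨f.toEmbedding, ?_⟩, fun i => rfl⟩
    intro a b
    show G.Adj (f a) (f b) ↔ _
    constructor
    · intro h; exact f.map_rel_iff.mp (Or.inl h)
    · intro h
      rcases f.map_rel_iff.mpr h with hG | hE
      · exact hG
      · exfalso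
        rw [edge_adj] at hE
        rcases hE.1 with ⟨h1, h2⟩ | ⟨h1, h2⟩
        · exact hc ⟨⟨a, h1⟩, ⟨b, h2⟩⟩
        · exact hc ⟨⟨b, h2⟩, ⟨a, h1⟩⟩
end

section
/- Let G be a graph and u, v non-adjacent vertices such that u and v lie in different connected components of G − I_{u,v}, where I_{u,v} = N(u) ∩ N(v) is nonempty. Then every induced path from u to v in G has exactly two edges (i.e., {u,v} is a two-pair). -/
open SimpleGraph

/-- If `u` and `v` are non-adjacent, their common neighborhood
`I = N(u) ∩ N(v)` is nonempty, and removing `I` leaves `u` and `v` in different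
components, then every induced `u`–`v` path of `G` has exactly two edges,
i.e. `{u,v}` is a two-pair. -/
theorem separated_twoPair {V : Type*} (G : SimpleGraph V) (u v : V)
    (hne : u ≠ v) (huv : ¬ G.Adj u v)
    (hI : (G.neighborSet u ∩ G.neighborSet v).Nonempty)
    (hsep : ¬ (G.induce ((G.neighborSet u ∩ G.neighborSet v)ᶜ)).Reachable
      ⟨u, fun h => G.irrefl h.1⟩ ⟨v, fun h => G.irrefl h.2⟩) :
    ∀ ℓ, HasInducedPath G u v ℓ → ℓ = 2 := by
  intro ℓ h
  obtain ⟨f, h0, hl⟩ := h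
  by_cases hmem : ∃ i, f i ∈ G.neighborSet u ∩ G.neighborSet v
  · obtain ⟨i, hu, hv⟩ := hmem
    have hu' : G.Adj (f 0) (f i) := h0 ▸ hu
    have hv' : G.Adj (f (Fin.last ℓ)) (f i) := hl ▸ hv
    rw [f.map_adj_iff, pathGraph_adj] at hu' hv'
    simp only [Fin.val_zero, Fin.val_last] at hu' hv'
    omega
  · push_neg at hmem
    exfalso
    apply hsep
    let g : SimpleGraph.pathGraph (ℓ + 1) →g
        (G.induce ((G.neighborSet u ∩ G.neighborSet v)ᶜ)) :=
      { toFun := fun i => ⟨f i, hmem i⟩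
        map_rel' := fun h => f.map_adj_iff.mpr h }
    have := (pathGraph_preconnected (ℓ + 1) 0 (Fin.last ℓ)).map g
    convert this using 2 <;>
      exact congrArg Subtype.val (by rfl) ▸ (by first | exact h0.symm | exact hl.symm)
end

section
/- For any two non-adjacent vertices u, v in a graph G, if G + uv is weakly chordal and G is weakly chordal, and every induced u–v path in G has length 2 or 3, then any two induced u–v paths of length 3 in G that are internally disjoint must have an edge between their internal vertex sets. -/
open SimpleGraph

set_option maxHeartbeats 1000000 in
/-- If `G` and `G + uv` are both weakly chordal, `u, v` are non-adjacent, and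
every induced `u`–`v` path in `G` has length 2 or 3, then any two internally
disjoint induced `u`–`v` paths of length 3, `u–x–y–v` and `u–x'–y'–v`, must
have an edge between their internal vertex sets `{x,y}` and `{x',y'}`. -/
theorem internally_disjoint_P3s_have_cross_edge {V : Type*} (G : SimpleGraph V)
    (u v x y x' y' : V)
    (hwcG : WeaklyChordal G)
    (hwcG' : WeaklyChordal (G ⊔ SimpleGraph.edge u v))
    (hne : u ≠ v) (huv : ¬ G.Adj u v)
    (h23 : ∀ ℓ, HasInducedPath G u v ℓ → ℓ = 2 ∨ ℓ = 3)
    -- first induced path u–x–y–v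
    (hux : G.Adj u x) (hxy : G.Adj x y) (hyv : G.Adj y v)
    (huy : ¬ G.Adj u y) (hxv : ¬ G.Adj x v)
    -- second induced path u–x'–y'–v
    (hux' : G.Adj u x') (hxy' : G.Adj x' y') (hyv' : G.Adj y' v)
    (huy' : ¬ G.Adj u y') (hxv' : ¬ G.Adj x' v)
    -- internally disjoint: {x, y} ∩ {x', y'} = ∅
    (hxx' : x ≠ x') (hxy2 : x ≠ y') (hyx' : y ≠ x') (hyy' : y ≠ y') :
    G.Adj x x' ∨ G.Adj x y' ∨ G.Adj y x' ∨ G.Adj y y' := by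
  by_contra hcon
  push_neg at hcon
  obtain ⟨haxx', haxy', hayx', hayy'⟩ := hcon
  -- distinctness facts
  have dux : u ≠ x := hux.ne
  have duy : u ≠ y := fun h => huv (h ▸ hyv)
  have dux' : u ≠ x' := hux'.ne
  have duy' : u ≠ y' := fun h => huv (h ▸ hyv')
  have dxv : x ≠ v := fun h => huv (h ▸ hux)
  have dxy : x ≠ y := hxy.ne
  have dyv : y ≠ v := hyv.ne
  have dx'v : x' ≠ v := fun h => huv (h ▸ hux')
  have dy'v : y' ≠ v := hyv'.ne
  have dx'y' : x' ≠ y' := hxy'.ne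
  -- symmetric adjacency facts
  have h1 := hux.symm; have h2 := hxy.symm; have h3 := hyv.symm
  have h4 := hux'.symm; have h5 := hxy'.symm; have h6 := hyv'.symm
  have n1 : ¬ G.Adj y u := fun h => huy h.symm
  have n2 : ¬ G.Adj v x := fun h => hxv h.symm
  have n3 : ¬ G.Adj y' u := fun h => huy' h.symm
  have n4 : ¬ G.Adj v x' := fun h => hxv' h.symm
  have n5 : ¬ G.Adj v u := fun h => huv h.symm
  have n6 : ¬ G.Adj x' x := fun h => haxx' h.symm
  have n7 : ¬ G.Adj y' x := fun h => haxy' h.symm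
  have n8 : ¬ G.Adj x' y := fun h => hayx' h.symm
  have n9 : ¬ G.Adj y' y := fun h => hayy' h.symm
  -- symmetric distinctness facts
  have e1 := dux.symm; have e2 := duy.symm; have e3 := hne.symm
  have e4 := duy'.symm; have e5 := dux'.symm; have e6 := dxy.symm
  have e7 := dxv.symm; have e8 := hxy2.symm; have e9 := hxx'.symm
  have e10 := dyv.symm; have e11 := hyy'.symm; have e12 := hyx'.symm
  have e13 := dy'v.symm; have e14 := dx'v.symm; have e15 := dx'y'.symm
  -- the 6-cycle u x y v y' x'
  have key : HasInducedCycle G 6 := by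
    refine ⟨⟨⟨![u, x, y, v, y', x'], ?_⟩, ?_⟩⟩
    · intro i j hij
      fin_cases i <;> fin_cases j <;>
        simp only [Fin.isValue, Fin.mk_zero, Fin.mk_one, Matrix.cons_val_zero,
          Matrix.cons_val_one, Matrix.head_cons, Matrix.cons_val_succ,
          Matrix.cons_val_fin_one] at hij <;>
        first
          | rfl
          | exact absurd hij (by assumption)
    · intro i j
      fin_cases i <;> fin_cases j <;>
        simp only [Fin.isValue, Fin.mk_zero, Fin.mk_one, Matrix.cons_val_zero,
          Matrix.cons_val_one, Matrix.head_cons, Matrix.cons_val_succ,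
          Matrix.cons_val_fin_one] <;>
        first
          | exact iff_of_true (by assumption) (by decide)
          | exact iff_of_false (by first | exact G.irrefl | assumption) (by decide)
  exact hwcG.1 6 (by norm_num) key
end
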